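/- Let M be a loopless multigraph with e(M) ≥ 1 satisfying max over μ ⊆ V(M) with |μ| ≥ 2 of e(M[μ])/(|μ|−1) = e(M)/(v(M)−1). Let F_M be the graph obtained by subdividing every edge of M and adding a new vertex v* adjacent to every vertex of V(M). Then m_2(F_M) = (e(F_M)−1)/(v(F_M)−2) = (2e(M)+v(M)−1)/(e(M)+v(M)−1); that is, F_M is 2-balanced. -/

import Mathlib

open Finset
open scoped Classical

/-- Number of edges of `F` induced by the vertex set `ν`. -/
noncomputable def eInd {V : Type*} [Fintype V] [DecidableEq V] (F : SimpleGraph V)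
    (ν : Finset V) : ℕ :=
  (F.edgeFinset.filter (fun e => ∀ v ∈ e, v ∈ ν)).card

/-- The 2-density of `F`: the maximum of `(e(F[ν]) - 1)/(|ν| - 2)` over `ν` with `|ν| ≥ 3`. -/
noncomputable def m2 {V : Type*} [Fintype V] [DecidableEq V] (F : SimpleGraph V) : ℝ :=
  sSup {x : ℝ | ∃ ν : Finset V, 3 ≤ ν.card ∧
    x = ((eInd F ν : ℝ) - 1) / ((ν.card : ℝ) - 2)}

/-- The graph `F_M` obtained from a loopless multigraph `M` (with vertex type `U`, edge index
type `E` and endpoint map `ep`) by subdividing every edge and adding a new vertex `v*`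
adjacent to every vertex of `M`. -/
noncomputable def FM {U E : Type*} (ep : E → Sym2 U) : SimpleGraph (U ⊕ E ⊕ Unit) :=
  SimpleGraph.fromRel (fun a b =>
    match a, b with
    | Sum.inl u, Sum.inr (Sum.inl e) => u ∈ ep e
    | Sum.inl _, Sum.inr (Sum.inr _) => True
    | _, _ => False)

/-- Number of edges of the multigraph induced by `μ ⊆ V(M)`. -/
noncomputable def eMulti {U E : Type*} [Fintype E] [DecidableEq U] (ep : E → Sym2 U)
    (μ : Finset U) : ℕ :=
  (Finset.univ.filter (fun e : E => ∀ u ∈ ep e, u ∈ μ)).card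

set_option linter.unusedSectionVars false
set_option linter.unusedVariables false

section Aux

lemma sym2_exists_pair' {α : Type*} (z : Sym2 α) : ∃ p q, z = s(p, q) :=
  Sym2.inductionOn z (fun p q => ⟨p, q, rfl⟩)

variable {U E : Type*} [Fintype U] [Fintype E] [DecidableEq U] [DecidableEq E] (ep : E → Sym2 U)

lemma eInd_FM' (ν : Finset (U ⊕ E ⊕ Unit)) :
    eInd (FM ep) ν =
      (∑ e ∈ univ.filter (fun e : E => Sum.inr (Sum.inl e) ∈ ν),
        (univ.filter (fun u : U => Sum.inl u ∈ ν ∧ u ∈ ep e)).card)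
      + (if Sum.inr (Sum.inr ()) ∈ ν then (univ.filter (fun u : U => Sum.inl u ∈ ν)).card else 0) := by
  classical
  have step1 : eInd (FM ep) ν =
      ((univ : Finset (U × (E ⊕ Unit))).filter (fun p =>
        Sum.inl p.1 ∈ ν ∧ Sum.inr p.2 ∈ ν ∧ ∀ e, p.2 = Sum.inl e → p.1 ∈ ep e)).card := by
    rw [eInd]
    refine (Finset.card_bij (s := (univ : Finset (U × (E ⊕ Unit))).filter (fun p =>
        Sum.inl p.1 ∈ ν ∧ Sum.inr p.2 ∈ ν ∧ ∀ e, p.2 = Sum.inl e → p.1 ∈ ep e))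
      (t := (FM ep).edgeFinset.filter (fun e => ∀ v ∈ e, v ∈ ν))
      (fun (p : U × (E ⊕ Unit)) _ => (s(Sum.inl p.1, Sum.inr p.2) : Sym2 (U ⊕ E ⊕ Unit))) ?_ ?_ ?_).symm
    · rintro ⟨u, x⟩ hp
      simp only [mem_filter, mem_univ, true_and] at hp
      obtain ⟨h1, h2, h3⟩ := hp
      simp only [mem_filter, SimpleGraph.mem_edgeFinset, SimpleGraph.mem_edgeSet]
      constructor
      · show (FM ep).Adj _ _
        rw [FM, SimpleGraph.fromRel_adj]
        refine ⟨by simp, Or.inl ?_⟩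
        rcases x with e | t
        · exact h3 e rfl
        · trivial
      · intro v hv
        rw [Sym2.mem_iff] at hv
        rcases hv with h | h <;> subst h <;> assumption
    · rintro ⟨u, x⟩ _ ⟨u', x'⟩ _ h
      rw [Sym2.eq_iff] at h
      rcases h with ⟨h1, h2⟩ | ⟨h1, h2⟩
      · simp_all
      · simp at h1
    · intro b hb
      induction b using Sym2.ind with
      | _ v w =>
        simp only [mem_filter, SimpleGraph.mem_edgeFinset, SimpleGraph.mem_edgeSet] at hb
        obtain ⟨hadj, hmem⟩ := hb
        rw [FM, SimpleGraph.fromRel_adj] at hadj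
        obtain ⟨hne, hr⟩ := hadj
        have hmv : v ∈ ν := hmem v (by simp)
        have hmw : w ∈ ν := hmem w (by simp)
        rcases hr with hr | hr
        · rcases v with u | e | t <;> rcases w with u' | e' | t' <;> simp only [] at hr
          · refine ⟨(u, Sum.inl e'), ?_, rfl⟩
            simp only [mem_filter, mem_univ, true_and]
            exact ⟨hmv, hmw, by rintro e'' he''; obtain rfl := Sum.inl.inj he''; exact hr⟩
          · refine ⟨(u, Sum.inr t'), ?_, rfl⟩
            simp only [mem_filter, mem_univ, true_and]
            exact ⟨hmv, hmw, by rintro e'' he''; simp at he''⟩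
        · rcases w with u | e | t <;> rcases v with u' | e' | t' <;> simp only [] at hr
          · refine ⟨(u, Sum.inl e'), ?_, Sym2.eq_swap⟩
            simp only [mem_filter, mem_univ, true_and]
            exact ⟨hmw, hmv, by rintro e'' he''; obtain rfl := Sum.inl.inj he''; exact hr⟩
          · refine ⟨(u, Sum.inr t'), ?_, Sym2.eq_swap⟩
            simp only [mem_filter, mem_univ, true_and]
            exact ⟨hmw, hmv, by rintro e'' he''; simp at he''⟩
  rw [step1, Finset.card_filter, ← Finset.univ_product_univ, Finset.sum_product_right,
    Fintype.sum_sum_type]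
  congr 1
  · rw [Finset.sum_filter]
    refine Finset.sum_congr rfl fun e _ => ?_
    rw [Finset.card_filter]
    by_cases he : Sum.inr (Sum.inl e : E ⊕ Unit) ∈ ν <;> simp [he]
  · rw [Fintype.sum_unique, Finset.card_filter]
    by_cases ht : (Sum.inr (Sum.inr () : E ⊕ Unit) : U ⊕ E ⊕ Unit) ∈ ν <;> simp [ht]

lemma card_nu' (ν : Finset (U ⊕ E ⊕ Unit)) :
    ν.card = (univ.filter (fun u : U => Sum.inl u ∈ ν)).card
      + (univ.filter (fun e : E => Sum.inr (Sum.inl e) ∈ ν)).card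
      + (if Sum.inr (Sum.inr ()) ∈ ν then 1 else 0) := by
  classical
  have hsplit : ν = ((univ.filter (fun u : U => Sum.inl u ∈ ν)).image Sum.inl)
      ∪ ((univ.filter (fun e : E => Sum.inr (Sum.inl e) ∈ ν)).image (fun e => Sum.inr (Sum.inl e)))
      ∪ (if Sum.inr (Sum.inr ()) ∈ ν then {Sum.inr (Sum.inr ())} else ∅) := by
    ext x
    simp only [mem_union, mem_image, mem_filter, mem_univ, true_and]
    rcases x with u | e | ⟨⟩
    · constructor
      · intro h; exact Or.inl (Or.inl ⟨u, h, rfl⟩)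
      · rintro ((⟨u', h, he⟩ | ⟨e', h, he⟩) | h)
        · obtain rfl := Sum.inl.inj he; exact h
        · simp at he
        · split at h <;> simp_all
    · constructor
      · intro h; exact Or.inl (Or.inr ⟨e, h, rfl⟩)
      · rintro ((⟨u', h, he⟩ | ⟨e', h, he⟩) | h)
        · simp at he
        · obtain rfl := Sum.inl.inj (Sum.inr.inj he); exact h
        · split at h <;> simp_all
    · constructor
      · intro h; right; simp [h]
      · rintro ((⟨u', h, he⟩ | ⟨e', h, he⟩) | h)
        · simp at he
        · simp at he
        · split at h <;> simp_all
  conv_lhs => rw [hsplit]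
  rw [Finset.card_union_of_disjoint, Finset.card_union_of_disjoint]
  · congr 1
    · congr 1
      · exact Finset.card_image_of_injective _ Sum.inl_injective
      · exact Finset.card_image_of_injective _ (fun a b h => Sum.inl.inj (Sum.inr.inj h))
    · split <;> simp
  · rw [Finset.disjoint_left]
    rintro x hx
    simp only [mem_image, mem_filter, mem_univ, true_and] at hx
    rcases hx with ⟨e', _, rfl⟩
    simp
  · rw [Finset.disjoint_left]
    rintro x hx
    simp only [mem_union, mem_image, mem_filter, mem_univ, true_and] at hx
    rcases hx with ⟨u', _, rfl⟩ | ⟨e', _, rfl⟩ <;> split <;> simp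

lemma two_le_cardU' (hloopless : ∀ e : E, ¬ (ep e).IsDiag) (hE : 1 ≤ Fintype.card E) :
    2 ≤ Fintype.card U := by
  obtain ⟨e⟩ := Fintype.card_pos_iff.mp hE
  obtain ⟨p, q, hpq⟩ := sym2_exists_pair' (ep e)
  have h := hloopless e
  rw [hpq, Sym2.isDiag_iff_proj_eq] at h
  exact Fintype.one_lt_card_iff.mpr ⟨p, q, h⟩

lemma filter_mem_card_le_two' (A : Finset U) (e : E) :
    (A.filter (fun u => u ∈ ep e)).card ≤ 2 := by
  obtain ⟨p, q, hpq⟩ := sym2_exists_pair' (ep e)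
  calc (A.filter (fun u => u ∈ ep e)).card ≤ ({p, q} : Finset U).card := by
        apply Finset.card_le_card
        intro x hx
        simp only [mem_filter, hpq, Sym2.mem_iff] at hx
        simp [hx.2]
    _ ≤ 2 := Finset.card_insert_le _ _ |>.trans (by simp)

lemma ce_bound' (A : Finset U) (e : E) :
    (A.filter (fun u => u ∈ ep e)).card ≤ 1 + (if ∀ u ∈ ep e, u ∈ A then 1 else 0) := by
  by_cases hb : ∀ u ∈ ep e, u ∈ A
  · rw [if_pos hb]
    have := filter_mem_card_le_two' ep A e
    omega
  · rw [if_neg hb]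
    push_neg at hb
    obtain ⟨w, hw1, hw2⟩ := hb
    obtain ⟨p, q, hpq⟩ := sym2_exists_pair' (ep e)
    rw [hpq, Sym2.mem_iff] at hw1
    have hsub : A.filter (fun u => u ∈ ep e) ⊆ if w = p then {q} else {p} := by
      intro x hx
      simp only [mem_filter, hpq, Sym2.mem_iff] at hx
      rcases hw1 with rfl | rfl
      · simp only [if_pos rfl, mem_singleton]
        rcases hx.2 with rfl | rfl
        · exact absurd hx.1 hw2
        · simp
      · by_cases hwp : w = p
        · subst hwp
          simp only [if_pos rfl, mem_singleton]
          rcases hx.2 with rfl | rfl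
          · exact absurd hx.1 hw2
          · simp
        · simp only [if_neg hwp, mem_singleton]
          rcases hx.2 with rfl | rfl
          · simp
          · exact absurd hx.1 hw2
    have h1 : (A.filter (fun u => u ∈ ep e)).card ≤ (if w = p then ({q} : Finset U) else {p}).card :=
      Finset.card_le_card hsub
    have h2 : (if w = p then ({q} : Finset U) else {p}).card ≤ 1 := by split <;> simp
    omega

lemma both_zero_of_small' (hloopless : ∀ e : E, ¬ (ep e).IsDiag) (A : Finset U)
    (hA : A.card ≤ 1) (e : E) (h : ∀ u ∈ ep e, u ∈ A) : False := by
  have hd := hloopless e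
  obtain ⟨p, q, hpq⟩ := sym2_exists_pair' (ep e)
  rw [hpq, Sym2.isDiag_iff_proj_eq] at hd
  have hp : p ∈ A := h p (by rw [hpq]; simp)
  have hq : q ∈ A := h q (by rw [hpq]; simp)
  have hsub : ({p, q} : Finset U) ⊆ A := by
    intro x hx; simp at hx; rcases hx with rfl | rfl <;> assumption
  have h2 : ({p, q} : Finset U).card = 2 := Finset.card_pair hd
  have := Finset.card_le_card hsub
  omega

lemma card_univ_filter_mem' (hloopless : ∀ e : E, ¬ (ep e).IsDiag) (e : E) :
    ((univ : Finset U).filter (fun u => u ∈ ep e)).card = 2 := by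
  obtain ⟨p, q, hpq⟩ := sym2_exists_pair' (ep e)
  have hd := hloopless e
  rw [hpq, Sym2.isDiag_iff_proj_eq] at hd
  have : (univ : Finset U).filter (fun u => u ∈ ep e) = {p, q} := by
    ext x
    simp [hpq, Sym2.mem_iff]
  rw [this, Finset.card_pair hd]

lemma hbal_real' (hbal : ∀ μ : Finset U, 2 ≤ μ.card →
      (eMulti ep μ : ℚ) / ((μ.card : ℚ) - 1) ≤
        (Fintype.card E : ℚ) / ((Fintype.card U : ℚ) - 1))
    (hn : 2 ≤ Fintype.card U) (A : Finset U) (hA : 2 ≤ A.card) :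
    ((Fintype.card U : ℝ) - 1) * (eMulti ep A : ℝ) ≤ (Fintype.card E : ℝ) * ((A.card : ℝ) - 1) := by
  have h := hbal A hA
  have h1 : (0 : ℚ) < (A.card : ℚ) - 1 := by
    have : (2 : ℚ) ≤ (A.card : ℚ) := by exact_mod_cast hA
    linarith
  have h2 : (0 : ℚ) < (Fintype.card U : ℚ) - 1 := by
    have : (2 : ℚ) ≤ (Fintype.card U : ℚ) := by exact_mod_cast hn
    linarith
  rw [div_le_div_iff₀ h1 h2] at h
  have h3 : ((Fintype.card U : ℚ) - 1) * (eMulti ep A : ℚ)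
      ≤ (Fintype.card E : ℚ) * ((A.card : ℚ) - 1) := by linarith
  exact_mod_cast h3

lemma arith_core' (m n a b c s k ε : ℝ) (hm : 1 ≤ m) (hn : 2 ≤ n) (hε : ε = 0 ∨ ε = 1)
    (hk : k = a + b + ε) (hk3 : 3 ≤ k) (hc0 : 0 ≤ c) (hcb : c ≤ b)
    (hs : s ≤ b + c + ε * a) (hs0 : 0 ≤ s)
    (ha0 : a = 0 → s = 0) (hsmall : a ≤ 1 → c = 0)
    (hbig : 2 ≤ a → (n - 1) * c ≤ m * (a - 1))
    (haint : a = 0 ∨ a = 1 ∨ 2 ≤ a) :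
    (s - 1) * (m + n - 1) ≤ (2 * m + n - 1) * (k - 2) := by
  rcases haint with rfl | rfl | ha2
  · have hs' := ha0 rfl
    have h1 : (0:ℝ) ≤ (2 * m + n - 1) * (k - 2) :=
      mul_nonneg (by linarith) (by linarith)
    nlinarith
  · have hc := hsmall (by norm_num)
    rcases hε with rfl | rfl <;>
    · have h1 : s - 1 ≤ k - 2 := by simp_all; linarith
      nlinarith [mul_le_mul_of_nonneg_right h1 (show (0:ℝ) ≤ m + n - 1 by linarith),
        mul_nonneg (show (0:ℝ) ≤ k - 2 by linarith) (show (0:ℝ) ≤ m by linarith)]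
  · have hb := hbig ha2
    rcases hε with rfl | rfl
    · nlinarith [mul_nonneg (show (0:ℝ) ≤ b - c by linarith) (show (0:ℝ) ≤ m by linarith),
        mul_nonneg (show (0:ℝ) ≤ a - 2 by linarith) (show (0:ℝ) ≤ m + n - 1 by linarith),
        mul_nonneg (show (0:ℝ) ≤ a - 2 by linarith) (show (0:ℝ) ≤ m by linarith)]
    · nlinarith [mul_nonneg (show (0:ℝ) ≤ b - c by linarith) (show (0:ℝ) ≤ m by linarith),
        mul_nonneg (show (0:ℝ) ≤ a - 2 by linarith) (show (0:ℝ) ≤ m + n - 1 by linarith),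
        mul_nonneg (show (0:ℝ) ≤ a - 2 by linarith) (show (0:ℝ) ≤ m by linarith)]

end Aux

/-- Let `M` be a loopless multigraph with `e(M) ≥ 1` such that
`max_{μ ⊆ V(M), |μ| ≥ 2} e(M[μ])/(|μ| - 1) = e(M)/(v(M) - 1)`.  Then
`m₂(F_M) = (e(F_M) - 1)/(v(F_M) - 2) = (2e(M) + v(M) - 1)/(e(M) + v(M) - 1)`,
i.e. `F_M` is 2-balanced. -/
theorem stmt18 {U E : Type*} [Fintype U] [Fintype E] [DecidableEq U] [DecidableEq E]
    (ep : E → Sym2 U)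
    (hloopless : ∀ e : E, ¬ (ep e).IsDiag)
    (hE : 1 ≤ Fintype.card E)
    (hbal : ∀ μ : Finset U, 2 ≤ μ.card →
      (eMulti ep μ : ℚ) / ((μ.card : ℚ) - 1) ≤
        (Fintype.card E : ℚ) / ((Fintype.card U : ℚ) - 1)) :
    m2 (FM ep) =
      (2 * (Fintype.card E : ℝ) + (Fintype.card U : ℝ) - 1) /
        ((Fintype.card E : ℝ) + (Fintype.card U : ℝ) - 1) := by
  classical
  set m := Fintype.card E with hm
  set n := Fintype.card U with hn
  have hn2 : 2 ≤ n := two_le_cardU' ep hloopless hE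
  have hmn : (0:ℝ) < (m:ℝ) + n - 1 := by
    have h1 : (1:ℝ) ≤ (m:ℝ) := by exact_mod_cast hE
    have h2 : (2:ℝ) ≤ (n:ℝ) := by exact_mod_cast hn2
    linarith
  -- Upper bound for every admissible vertex set.
  have hub : ∀ ν : Finset (U ⊕ E ⊕ Unit), 3 ≤ ν.card →
      ((eInd (FM ep) ν : ℝ) - 1) / ((ν.card : ℝ) - 2) ≤
        (2 * (m:ℝ) + n - 1) / ((m:ℝ) + n - 1) := by
    intro ν h3
    set A := (univ : Finset U).filter (fun u => Sum.inl u ∈ ν) with hA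
    set B := (univ : Finset E).filter (fun e => Sum.inr (Sum.inl e) ∈ ν) with hB
    set εn : ℕ := if Sum.inr (Sum.inr ()) ∈ ν then 1 else 0 with hεn
    set c := (B.filter (fun e => ∀ u ∈ ep e, u ∈ A)).card with hc
    have hkn : ν.card = A.card + B.card + εn := card_nu' ν
    have hse : eInd (FM ep) ν
        = (∑ e ∈ B, (A.filter (fun u => u ∈ ep e)).card) + εn * A.card := by
      rw [eInd_FM' ep ν]
      congr 1
      · refine Finset.sum_congr rfl fun e he => ?_
        rw [hA, Finset.filter_filter]
      · rw [hεn]; split <;> simp [hA]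
    have hsum : (∑ e ∈ B, (A.filter (fun u => u ∈ ep e)).card) ≤ B.card + c := by
      calc (∑ e ∈ B, (A.filter (fun u => u ∈ ep e)).card)
          ≤ ∑ e ∈ B, (1 + if ∀ u ∈ ep e, u ∈ A then 1 else 0) :=
            Finset.sum_le_sum (fun e _ => ce_bound' ep A e)
        _ = B.card + c := by
            rw [Finset.sum_add_distrib, Finset.sum_const, smul_eq_mul, mul_one, hc]
            congr 1
            exact (Finset.card_filter _ _).symm
    have hcle : c ≤ eMulti ep A := by
      rw [hc, eMulti]
      apply Finset.card_le_card
      intro e he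
      simp only [Finset.mem_filter] at he ⊢
      exact ⟨Finset.mem_univ _, he.2⟩
    have hk2 : (0:ℝ) < (ν.card : ℝ) - 2 := by
      have : (3:ℝ) ≤ (ν.card : ℝ) := by exact_mod_cast h3
      linarith
    rw [div_le_div_iff₀ hk2 hmn]
    refine arith_core' (m:ℝ) (n:ℝ) (A.card : ℝ) (B.card : ℝ) (c : ℝ)
      (eInd (FM ep) ν : ℝ) (ν.card : ℝ) (εn : ℝ)
      (by exact_mod_cast hE) (by exact_mod_cast hn2)
      (by rw [hεn]; split <;> simp)
      (by exact_mod_cast hkn) (by exact_mod_cast h3)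
      (by positivity)
      (by exact_mod_cast (by rw [hc]; exact Finset.card_filter_le _ _ : c ≤ B.card))
      (by exact_mod_cast (by omega : eInd (FM ep) ν ≤ B.card + c + εn * A.card))
      (by positivity) ?_ ?_ ?_ ?_
    · intro ha
      have ha' : A.card = 0 := by exact_mod_cast ha
      have hAe : A = ∅ := Finset.card_eq_zero.mp ha'
      have : eInd (FM ep) ν = 0 := by
        rw [hse, hAe]
        simp
      rw [this]; norm_num
    · intro ha
      have ha' : A.card ≤ 1 := by exact_mod_cast ha
      have : c = 0 := by
        rw [hc, Finset.card_eq_zero, Finset.filter_eq_empty_iff]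
        intro e _ h
        exact both_zero_of_small' ep hloopless A ha' e h
      rw [this]; norm_num
    · intro ha
      have ha' : 2 ≤ A.card := by exact_mod_cast ha
      have h1 := hbal_real' ep hbal hn2 A ha'
      have h2 : ((n:ℝ) - 1) * (c : ℝ) ≤ ((n:ℝ) - 1) * (eMulti ep A : ℝ) := by
        apply mul_le_mul_of_nonneg_left _ (by
          have : (2:ℝ) ≤ (n:ℝ) := by exact_mod_cast hn2
          linarith)
        exact_mod_cast hcle
      calc ((n:ℝ) - 1) * (c : ℝ) ≤ ((n:ℝ) - 1) * (eMulti ep A : ℝ) := h2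
        _ ≤ (m:ℝ) * ((A.card : ℝ) - 1) := h1
    · have : A.card = 0 ∨ A.card = 1 ∨ 2 ≤ A.card := by omega
      rcases this with h | h | h
      · exact Or.inl (by exact_mod_cast h)
      · exact Or.inr (Or.inl (by exact_mod_cast h))
      · exact Or.inr (Or.inr (by exact_mod_cast h))
  -- The maximum is attained at the full vertex set.
  have hcarduniv : (univ : Finset (U ⊕ E ⊕ Unit)).card = n + m + 1 := by
    rw [Finset.card_univ]
    simp only [Fintype.card_sum, Fintype.card_unit]
    rw [hm, hn]
    omega
  have heInduniv : eInd (FM ep) (univ : Finset (U ⊕ E ⊕ Unit)) = 2 * m + n := by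
    rw [eInd_FM' ep univ]
    have h1 : (univ : Finset E).filter (fun e => Sum.inr (Sum.inl e) ∈ (univ : Finset (U ⊕ E ⊕ Unit))) = univ := by
      apply Finset.filter_true_of_mem; intros; exact Finset.mem_univ _
    have h2 : ∀ e : E, ((univ : Finset U).filter
        (fun u => Sum.inl u ∈ (univ : Finset (U ⊕ E ⊕ Unit)) ∧ u ∈ ep e)).card = 2 := by
      intro e
      rw [← card_univ_filter_mem' ep hloopless e]
      congr 1
      apply Finset.filter_congr
      intro u _
      simp
    rw [h1, if_pos (Finset.mem_univ _)]
    have h3 : ((univ : Finset U).filter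
        (fun u => Sum.inl u ∈ (univ : Finset (U ⊕ E ⊕ Unit)))).card = n := by
      rw [Finset.filter_true_of_mem (fun _ _ => Finset.mem_univ _), Finset.card_univ]
    rw [h3]
    rw [Finset.sum_congr rfl (fun e _ => h2 e), Finset.sum_const, Finset.card_univ,
      smul_eq_mul]
    ring
  have hGreatest : IsGreatest {x : ℝ | ∃ ν : Finset (U ⊕ E ⊕ Unit), 3 ≤ ν.card ∧
      x = ((eInd (FM ep) ν : ℝ) - 1) / ((ν.card : ℝ) - 2)}
      ((2 * (m:ℝ) + n - 1) / ((m:ℝ) + n - 1)) := by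
    constructor
    · refine ⟨univ, by omega, ?_⟩
      rw [heInduniv, hcarduniv]
      have hd : ((n + m + 1 : ℕ) : ℝ) - 2 = (m:ℝ) + n - 1 := by push_cast; ring
      have hnum : ((2 * m + n : ℕ) : ℝ) - 1 = 2 * (m:ℝ) + n - 1 := by push_cast; ring
      rw [hd, hnum]
    · rintro x ⟨ν, h3, rfl⟩
      exact hub ν h3
  rw [m2, hGreatest.csSup_eq]
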